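/- Let G be a finite simple graph, let v be a leaf of G (a vertex of degree 1) with unique neighbor w, and let G' = G − v be the induced subgraph obtained by deleting v (and the edge vw). For any Scarf face σ of I(G'), the set σ ∪ {vw} is a Scarf face of I(G) if and only if dist_G(e, vw) ≠ 1 for every edge e ∈ σ. -/

import Mathlib

/-- The monomial (exponent vector) of an edge: `1` on its endpoints, `0` elsewhere. -/
def edgeMon {V : Type*} [DecidableEq V] (e : Sym2 V) : V → ℕ :=
  fun x => if x ∈ e then 1 else 0

/-- The lcm (componentwise max) of the monomials of a finite set of edges. -/
def eLcm {V : Type*} [DecidableEq V] (σ : Finset (Sym2 V)) : V → ℕ :=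
  σ.sup edgeMon

/-- `σ` is a Scarf face of the edge ideal `I(G)`, identified with a set of edges of `G`:
its lcm is distinct from the lcm of any other set of edges of `G`. -/
def IsScarf {V : Type*} [DecidableEq V] (G : SimpleGraph V) (σ : Finset (Sym2 V)) : Prop :=
  (∀ e ∈ σ, e ∈ G.edgeSet) ∧
    ∀ τ : Finset (Sym2 V), (∀ e ∈ τ, e ∈ G.edgeSet) → eLcm τ = eLcm σ → τ = σ

/-- `dist_G(e, f) = 0`: the two edges share a vertex. -/
def Dist0 {V : Type*} (e f : Sym2 V) : Prop := ∃ x, x ∈ e ∧ x ∈ f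

/-- `dist_G(e, f) = 1`: the edges are vertex-disjoint, but some endpoint of `e` is
adjacent in `G` to some endpoint of `f`. -/
def Dist1 {V : Type*} (G : SimpleGraph V) (e f : Sym2 V) : Prop :=
  ¬ Dist0 e f ∧ ∃ x ∈ e, ∃ y ∈ f, G.Adj x y

/-- The graph `G - v`: delete the vertex `v`, i.e. all edges incident to `v`
(keeping the vertex set). -/
def delVert {V : Type*} (G : SimpleGraph V) (v : V) : SimpleGraph V where
  Adj x y := G.Adj x y ∧ x ≠ v ∧ y ≠ v
  symm := ⟨fun x y h => ⟨h.1.symm, h.2.2, h.2.1⟩⟩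
  loopless := ⟨fun x h => h.1.ne rfl⟩

lemma edgeMon_le_one {V : Type*} [DecidableEq V] (e : Sym2 V) (u : V) : edgeMon e u ≤ 1 := by
  unfold edgeMon; split <;> simp

open Classical in
lemma eLcm_apply {V : Type*} [DecidableEq V] (σ : Finset (Sym2 V)) (u : V) :
    eLcm σ u = if ∃ e ∈ σ, u ∈ e then 1 else 0 := by
  rw [eLcm, Finset.sup_apply]
  split_ifs with h
  · obtain ⟨e, he, hu⟩ := h
    refine le_antisymm (Finset.sup_le fun f _ => edgeMon_le_one f u) ?_
    have h1 : edgeMon e u = 1 := by simp [edgeMon, hu]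
    exact le_trans (le_of_eq h1.symm) (Finset.le_sup (f := fun e => edgeMon e u) he)
  · refine Nat.le_antisymm (Finset.sup_le fun f hf => ?_) (Nat.zero_le _)
    have hu : u ∉ f := fun hu => h ⟨f, hf, hu⟩
    simp [edgeMon, hu]

lemma eLcm_eq_iff {V : Type*} [DecidableEq V] (τ σ : Finset (Sym2 V)) :
    eLcm τ = eLcm σ ↔ ∀ u, (∃ e ∈ τ, u ∈ e) ↔ (∃ e ∈ σ, u ∈ e) := by
  classical
  constructor
  · intro h u
    have h2 := congrFun h u
    rw [eLcm_apply, eLcm_apply] at h2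
    constructor
    · intro h1; by_contra h3; simp [h1, h3] at h2
    · intro h3; by_contra h1; simp [h1, h3] at h2
  · intro h; funext u
    rw [eLcm_apply, eLcm_apply]
    simp only [h u]

lemma mem_delVert_edgeSet {V : Type*} (G : SimpleGraph V) (v : V) (e : Sym2 V) :
    e ∈ (delVert G v).edgeSet ↔ e ∈ G.edgeSet ∧ v ∉ e := by
  induction e using Sym2.ind with
  | _ a b =>
    rw [SimpleGraph.mem_edgeSet, SimpleGraph.mem_edgeSet]
    show (G.Adj a b ∧ a ≠ v ∧ b ≠ v) ↔ _
    rw [Sym2.mem_iff]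
    constructor
    · rintro ⟨h, ha, hb⟩
      exact ⟨h, by rintro (rfl | rfl) <;> simp_all⟩
    · rintro ⟨h, hv⟩
      exact ⟨h, fun hh => hv (Or.inl hh.symm), fun hh => hv (Or.inr hh.symm)⟩

lemma exists_other {V : Type*} (G : SimpleGraph V) (e : Sym2 V) (u : V)
    (he : e ∈ G.edgeSet) (hu : u ∈ e) : ∃ z, e = s(u, z) ∧ G.Adj u z := by
  induction e using Sym2.ind with
  | _ a b =>
    rw [SimpleGraph.mem_edgeSet] at he
    rw [Sym2.mem_iff] at hu
    rcases hu with rfl | rfl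
    · exact ⟨b, rfl, he⟩
    · exact ⟨a, Sym2.eq_swap, he.symm⟩

theorem stmt11 {V : Type*} [Fintype V] [DecidableEq V] (G : SimpleGraph V) (v w : V)
    (hvw : G.Adj v w) (hleaf : ∀ x, G.Adj v x → x = w)
    (σ : Finset (Sym2 V)) (hσ : IsScarf (delVert G v) σ) :
    IsScarf G (insert s(v, w) σ) ↔ ∀ e ∈ σ, ¬ Dist1 G e s(v, w) := by
  classical
  obtain ⟨hσG, hσS⟩ := hσ
  have hσGE : ∀ e ∈ σ, e ∈ G.edgeSet := fun e he => ((mem_delVert_edgeSet G v e).1 (hσG e he)).1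
  have hvnot : ∀ e ∈ σ, v ∉ e := fun e he => ((mem_delVert_edgeSet G v e).1 (hσG e he)).2
  have hleafE : ∀ e ∈ G.edgeSet, v ∈ e → e = s(v, w) := by
    intro e he hv
    obtain ⟨z, rfl, hz⟩ := exists_other G e v he hv
    rw [hleaf z hz]
  constructor
  · -- Scarf → no Dist1
    rintro ⟨hAG, hAS⟩ e he ⟨hnd, x, hx, y, hy, hxy⟩
    have hwe : w ∉ e := fun hw => hnd ⟨w, hw, by simp⟩
    have hyw : y = w := by
      rw [Sym2.mem_iff] at hy
      rcases hy with h | h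
      · exfalso
        rw [h] at hxy
        have hxw := hleaf x hxy.symm
        rw [hxw] at hx
        exact hwe hx
      · exact h
    rw [hyw] at hxy
    have hxv : x ≠ v := fun h => hvnot e he (h ▸ hx)
    have hxw : x ≠ w := fun h => hwe (h ▸ hx)
    have hne : s(x, w) ≠ s(v, w) := by simp [Sym2.eq_iff, hxv, hxw]
    by_cases hmem : s(x, w) ∈ σ
    · -- remove s(x,w)
      have hkey := hAS (insert s(v, w) (σ.erase s(x, w)))
        (by
          intro f hf
          rcases Finset.mem_insert.1 hf with rfl | hf
          · exact G.mem_edgeSet.mpr hvw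
          · exact hσGE f (Finset.mem_of_mem_erase hf))
        (by
          rw [eLcm_eq_iff]
          intro u
          constructor
          · rintro ⟨f, hf, hu⟩
            rcases Finset.mem_insert.1 hf with rfl | hf
            · exact ⟨s(v, w), Finset.mem_insert_self _ _, hu⟩
            · exact ⟨f, Finset.mem_insert_of_mem (Finset.mem_of_mem_erase hf), hu⟩
          · rintro ⟨f, hf, hu⟩
            rcases Finset.mem_insert.1 hf with rfl | hf
            · exact ⟨s(v, w), Finset.mem_insert_self _ _, hu⟩
            · by_cases hfx : f = s(x, w)
              · subst hfx
                rw [Sym2.mem_iff] at hu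
                rcases hu with h | h
                · subst h
                  refine ⟨e, Finset.mem_insert_of_mem (Finset.mem_erase.2 ⟨?_, he⟩), hx⟩
                  intro h
                  exact hwe (by rw [h]; simp)
                · exact ⟨s(v, w), Finset.mem_insert_self _ _, by rw [h]; simp⟩
              · exact ⟨f, Finset.mem_insert_of_mem (Finset.mem_erase.2 ⟨hfx, hf⟩), hu⟩)
      have hmem2 : s(x, w) ∈ insert s(v, w) (σ.erase s(x, w)) :=
        hkey ▸ Finset.mem_insert_of_mem hmem
      rcases Finset.mem_insert.1 hmem2 with h | h
      · exact hne h
      · exact (Finset.mem_erase.1 h).1 rfl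
    · -- add s(x,w)
      have hkey := hAS (insert s(x, w) (insert s(v, w) σ))
        (by
          intro f hf
          rcases Finset.mem_insert.1 hf with rfl | hf
          · exact G.mem_edgeSet.mpr hxy
          · rcases Finset.mem_insert.1 hf with rfl | hf
            · exact G.mem_edgeSet.mpr hvw
            · exact hσGE f hf)
        (by
          rw [eLcm_eq_iff]
          intro u
          constructor
          · rintro ⟨f, hf, hu⟩
            rcases Finset.mem_insert.1 hf with rfl | hf
            · rw [Sym2.mem_iff] at hu
              rcases hu with h | h
              · exact ⟨e, Finset.mem_insert_of_mem he, h ▸ hx⟩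
              · exact ⟨s(v, w), Finset.mem_insert_self _ _, by rw [h]; simp⟩
            · exact ⟨f, hf, hu⟩
          · rintro ⟨f, hf, hu⟩
            exact ⟨f, Finset.mem_insert_of_mem hf, hu⟩)
      have hmem2 : s(x, w) ∈ insert s(v, w) σ := hkey ▸ Finset.mem_insert_self _ _
      rcases Finset.mem_insert.1 hmem2 with h | h
      · exact hne h
      · exact hmem h
  · -- no Dist1 → Scarf
    intro hD
    refine ⟨?_, ?_⟩
    · intro f hf
      rcases Finset.mem_insert.1 hf with rfl | hf
      · exact G.mem_edgeSet.mpr hvw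
      · exact hσGE f hf
    · intro τ hτG hlcm
      have hcov := (eLcm_eq_iff τ _).1 hlcm
      have hvτ : s(v, w) ∈ τ := by
        obtain ⟨f, hf, hvf⟩ := (hcov v).2 ⟨s(v, w), Finset.mem_insert_self _ _, by simp⟩
        have h := hleafE f (hτG f hf) hvf
        rwa [h] at hf
      set τ' := τ.erase s(v, w) with hτ'def
      have hτ'G : ∀ f ∈ τ', f ∈ (delVert G v).edgeSet := by
        intro f hf
        have hfτ := Finset.mem_of_mem_erase hf
        have hfne := (Finset.mem_erase.1 hf).1
        rw [mem_delVert_edgeSet]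
        exact ⟨hτG f hfτ, fun hv => hfne (hleafE f (hτG f hfτ) hv)⟩
      have hτ'v : ∀ f ∈ τ', v ∉ f := fun f hf => ((mem_delVert_edgeSet G v f).1 (hτ'G f hf)).2
      have hcov' : ∀ u, u ≠ v → u ≠ w → ((∃ f ∈ τ', u ∈ f) ↔ (∃ f ∈ σ, u ∈ f)) := by
        intro u huv huw
        constructor
        · rintro ⟨f, hf, hu⟩
          obtain ⟨g, hg, hug⟩ := (hcov u).1 ⟨f, Finset.mem_of_mem_erase hf, hu⟩
          rcases Finset.mem_insert.1 hg with rfl | hg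
          · rw [Sym2.mem_iff] at hug; tauto
          · exact ⟨g, hg, hug⟩
        · rintro ⟨f, hf, hu⟩
          obtain ⟨g, hg, hug⟩ := (hcov u).2 ⟨f, Finset.mem_insert_of_mem hf, hu⟩
          refine ⟨g, Finset.mem_erase.2 ⟨?_, hg⟩, hug⟩
          rintro rfl
          rw [Sym2.mem_iff] at hug; tauto
      have hcovw : (∃ f ∈ τ', w ∈ f) ↔ (∃ f ∈ σ, w ∈ f) := by
        constructor
        · rintro ⟨f, hf, hw⟩
          by_contra hno
          push_neg at hno
          obtain ⟨z, rfl, hwz⟩ :=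
            exists_other G f w (hτG f (Finset.mem_of_mem_erase hf)) hw
          have hzv : z ≠ v := fun h => hτ'v _ hf (by rw [h]; simp)
          have hzw : z ≠ w := fun h => hwz.ne' (h ▸ rfl)
          obtain ⟨g, hg, hzg⟩ := (hcov z).1 ⟨s(w, z), Finset.mem_of_mem_erase hf, by simp⟩
          rcases Finset.mem_insert.1 hg with rfl | hg
          · rw [Sym2.mem_iff] at hzg; tauto
          · refine hD g hg ⟨?_, z, hzg, w, by simp, hwz.symm⟩
            rintro ⟨u, hu1, hu2⟩
            rw [Sym2.mem_iff] at hu2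
            rcases hu2 with h | h
            · exact hvnot g hg (h ▸ hu1)
            · exact hno g hg (h ▸ hu1)
        · rintro ⟨f, hf, hw⟩
          by_contra hno
          push_neg at hno
          obtain ⟨z, rfl, hwz⟩ := exists_other G f w (hσGE f hf) hw
          have hzv : z ≠ v := fun h => hvnot _ hf (by rw [h]; simp)
          have hzw : z ≠ w := fun h => hwz.ne' (h ▸ rfl)
          have hρ : insert s(w, z) τ' = σ := by
            refine hσS _ ?_ ?_
            · intro g hg
              rcases Finset.mem_insert.1 hg with rfl | hg
              · exact hσG _ hf
              · exact hτ'G g hg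
            · rw [eLcm_eq_iff]
              intro u
              constructor
              · rintro ⟨g, hg, hu⟩
                rcases Finset.mem_insert.1 hg with rfl | hg
                · exact ⟨s(w, z), hf, hu⟩
                · by_cases huw : u = w
                  · exact absurd hu (huw ▸ hno g hg)
                  · have huv : u ≠ v := fun h => hτ'v g hg (h ▸ hu)
                    exact (hcov' u huv huw).1 ⟨g, hg, hu⟩
              · rintro ⟨g, hg, hu⟩
                by_cases huw : u = w
                · exact ⟨s(w, z), Finset.mem_insert_self _ _, by rw [huw]; simp⟩
                · have huv : u ≠ v := fun h => hvnot g hg (h ▸ hu)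
                  obtain ⟨g', hg', hu'⟩ := (hcov' u huv huw).2 ⟨g, hg, hu⟩
                  exact ⟨g', Finset.mem_insert_of_mem hg', hu'⟩
          obtain ⟨g, hg, hzg⟩ := (hcov' z hzv hzw).2 ⟨s(w, z), hf, by simp⟩
          have hgσ : g ∈ σ := by rw [← hρ]; exact Finset.mem_insert_of_mem hg
          refine hD g hgσ ⟨?_, z, hzg, w, by simp, hwz.symm⟩
          rintro ⟨u, hu1, hu2⟩
          rw [Sym2.mem_iff] at hu2
          rcases hu2 with h | h
          · exact hτ'v g hg (h ▸ hu1)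
          · exact hno g hg (h ▸ hu1)
      have hcovAll : ∀ u, (∃ f ∈ τ', u ∈ f) ↔ (∃ f ∈ σ, u ∈ f) := by
        intro u
        by_cases huv : u = v
        · subst huv
          constructor
          · rintro ⟨f, hf, hu⟩; exact absurd hu (hτ'v f hf)
          · rintro ⟨f, hf, hu⟩; exact absurd hu (hvnot f hf)
        · by_cases huw : u = w
          · subst huw; exact hcovw
          · exact hcov' u huv huw
      have hτσ : τ' = σ := hσS τ' hτ'G ((eLcm_eq_iff _ _).2 hcovAll)
      rw [← hτσ, hτ'def]
      exact (Finset.insert_erase hvτ).symm
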